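/- Let P be a locally convex subset of a finite-dimensional real affine space and let I ⊆ P be an open line segment (open interval). Then the tangent cone C_a P := ℝ_{≥0}·(P∩U − a), where P∩U is a convex neighborhood of a in P, is the same for all a ∈ I. -/
import Mathlib

open Filter Set Topology

section Aux

variable {V : Type*} [NormedAddCommGroup V] [NormedSpace ℝ V]

/-- The cone generated by `N - c`. -/
def myCone (N : Set V) (c : V) : Set V :=
  {v : V | ∃ t : ℝ, 0 ≤ t ∧ ∃ p ∈ N, v = t • (p - c)}

lemma myCone_smul {N : Set V} {c : V} {t : ℝ} (ht : 0 ≤ t) {v : V}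
    (hv : v ∈ myCone N c) : t • v ∈ myCone N c := by
  obtain ⟨s, hs, p, hp, rfl⟩ := hv
  exact ⟨t * s, mul_nonneg ht hs, p, hp, (mul_smul t s _).symm⟩

lemma myCone_add {N : Set V} (hN : Convex ℝ N) {c : V} {u v : V}
    (hu : u ∈ myCone N c) (hv : v ∈ myCone N c) : u + v ∈ myCone N c := by
  obtain ⟨s, hs, p, hp, rfl⟩ := hu
  obtain ⟨t, ht, q, hq, rfl⟩ := hv
  rcases eq_or_lt_of_le (add_nonneg hs ht) with h | h
  · have hs0 : s = 0 := by linarith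
    have ht0 : t = 0 := by linarith
    exact ⟨0, le_refl 0, p, hp, by simp [hs0, ht0]⟩
  · have hst : s + t ≠ 0 := ne_of_gt h
    refine ⟨s + t, le_of_lt h, (s / (s + t)) • p + (t / (s + t)) • q,
      hN hp hq (div_nonneg hs (le_of_lt h)) (div_nonneg ht (le_of_lt h))
        (by field_simp), ?_⟩
    have h1 : (s + t) * (s / (s + t)) = s := by field_simp
    have h2 : (s + t) * (t / (s + t)) = t := by field_simp
    conv_rhs => rw [smul_sub, smul_add, smul_smul, smul_smul, h1, h2]
    rw [smul_sub, smul_sub, add_smul]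
    abel

/-- If moving from `c` in direction `d` stays in `P` for small positive times,
then `d` is in the cone of any neighborhood of `c` within `P`. -/
lemma dir_mem_myCone {P M : Set V} {c : V} (hM : M ∈ nhdsWithin c P) {d : V}
    (h : ∀ᶠ s : ℝ in 𝓝[>] (0:ℝ), c + s • d ∈ P) : d ∈ myCone M c := by
  obtain ⟨u, hu, hcu, huM⟩ := mem_nhdsWithin.1 hM
  have hcont : Continuous fun s : ℝ => c + s • d := by continuity
  have h2 : ∀ᶠ s : ℝ in 𝓝 (0:ℝ), c + s • d ∈ u :=
    (hu.preimage hcont).mem_nhds (by simpa using hcu)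
  have h3 : ∀ᶠ s : ℝ in 𝓝[>] (0:ℝ), c + s • d ∈ u := h2.filter_mono nhdsWithin_le_nhds
  obtain ⟨s, ⟨hsP, hsu⟩, hs⟩ := ((h.and h3).and self_mem_nhdsWithin).exists
  have hs0 : (0:ℝ) < s := hs
  refine ⟨s⁻¹, le_of_lt (inv_pos.2 hs0), c + s • d, huM ⟨hsu, hsP⟩, ?_⟩
  rw [add_sub_cancel_left, smul_smul, inv_mul_cancel₀ (ne_of_gt hs0), one_smul]

/-- The cone is independent of the choice of convex neighborhood (one inclusion). -/
lemma myCone_welldef {P M N : Set V} {c : V} (hcP : c ∈ P)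
    (hM : Convex ℝ M) (hMP : M ⊆ P) (hMc : M ∈ nhdsWithin c P)
    (hNc : N ∈ nhdsWithin c P) : myCone M c ⊆ myCone N c := by
  rintro v ⟨t, ht, p, hp, rfl⟩
  have hcM : c ∈ M := mem_of_mem_nhdsWithin hcP hMc
  have hev : ∀ᶠ s : ℝ in 𝓝[>] (0:ℝ), c + s • (p - c) ∈ P := by
    filter_upwards [Ioc_mem_nhdsGT_of_mem (by simp : (0:ℝ) ∈ Ico (0:ℝ) 1)] with s hs
    have heq : c + s • (p - c) = (1 - s) • c + s • p := by
      rw [smul_sub, sub_smul, one_smul]; abel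
    rw [heq]
    exact hMP (hM hcM hp (by linarith [hs.2]) (le_of_lt hs.1) (by ring))
  exact myCone_smul ht (dir_mem_myCone hNc hev)

lemma myCone_welldef_eq {P M N : Set V} {c : V} (hcP : c ∈ P)
    (hM : Convex ℝ M) (hMP : M ⊆ P) (hMc : M ∈ nhdsWithin c P)
    (hN : Convex ℝ N) (hNP : N ⊆ P) (hNc : N ∈ nhdsWithin c P) :
    myCone M c = myCone N c :=
  Set.Subset.antisymm (myCone_welldef hcP hM hMP hMc hNc)
    (myCone_welldef hcP hN hNP hNc hMc)

/-- Moving along the line of the open segment stays in the open segment for small times. -/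
lemma seg_eventually {x y c : V} (hc : c ∈ openSegment ℝ x y) (δ : ℝ) :
    ∀ᶠ s : ℝ in 𝓝[>] (0:ℝ), c + s • (δ • (y - x)) ∈ openSegment ℝ x y := by
  rw [openSegment_eq_image'] at hc
  obtain ⟨θ, hθ, rfl⟩ := hc
  have hcont : Continuous fun s : ℝ => θ + s * δ := by continuity
  have hmem : ∀ᶠ s : ℝ in 𝓝 (0:ℝ), θ + s * δ ∈ Ioo (0:ℝ) 1 :=
    (isOpen_Ioo.preimage hcont).mem_nhds (by simpa using hθ)
  have hmem' : ∀ᶠ s : ℝ in 𝓝[>] (0:ℝ), θ + s * δ ∈ Ioo (0:ℝ) 1 :=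
    hmem.filter_mono nhdsWithin_le_nhds
  filter_upwards [hmem'] with s hs
  rw [openSegment_eq_image']
  refine ⟨θ + s * δ, hs, ?_⟩
  show x + (θ + s * δ) • (y - x) = _
  rw [add_smul, smul_smul]
  abel

/-- Direction between two points of the open segment belongs to the cone at either. -/
lemma seg_dir_mem {P N : Set V} {x y c c' : V} (hI : openSegment ℝ x y ⊆ P)
    (hc : c ∈ openSegment ℝ x y) (hc' : c' ∈ openSegment ℝ x y)
    (hNc' : N ∈ nhdsWithin c' P) : c' - c ∈ myCone N c' := by
  obtain ⟨θ, hθ, rfl⟩ := (openSegment_eq_image' (𝕜 := ℝ) x y) ▸ hc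
  obtain ⟨θ', hθ', rfl⟩ := (openSegment_eq_image' (𝕜 := ℝ) x y) ▸ hc'
  have hdiff : (x + θ' • (y - x)) - (x + θ • (y - x)) = (θ' - θ) • (y - x) := by
    rw [sub_smul]; abel
  rw [hdiff]
  refine dir_mem_myCone hNc' ?_
  filter_upwards [seg_eventually hc' (θ' - θ)] with s hs
  exact hI hs

/-- Base-change along the segment: the cone at `c` is contained in the cone at `c'`. -/
lemma myCone_base_change {P N : Set V} {x y c c' : V} (hI : openSegment ℝ x y ⊆ P)
    (hc : c ∈ openSegment ℝ x y) (hc' : c' ∈ openSegment ℝ x y)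
    (hN : Convex ℝ N) (hNc' : N ∈ nhdsWithin c' P) :
    myCone N c ⊆ myCone N c' := by
  rintro v ⟨t, ht, p, hp, rfl⟩
  have hd : c' - c ∈ myCone N c' := seg_dir_mem hI hc hc' hNc'
  have hp' : p - c' ∈ myCone N c' := ⟨1, zero_le_one, p, hp, (one_smul ℝ _).symm⟩
  have heq : t • (p - c) = t • (p - c') + t • (c' - c) := by
    rw [← smul_add]; congr 1; abel
  rw [heq]
  exact myCone_add hN (myCone_smul ht hp') (myCone_smul ht hd)

lemma myCone_local_eq {P N : Set V} {x y c c' : V} (hI : openSegment ℝ x y ⊆ P)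
    (hc : c ∈ openSegment ℝ x y) (hc' : c' ∈ openSegment ℝ x y)
    (hN : Convex ℝ N) (hNc : N ∈ nhdsWithin c P) (hNc' : N ∈ nhdsWithin c' P) :
    myCone N c = myCone N c' :=
  Set.Subset.antisymm (myCone_base_change hI hc hc' hN hNc')
    (myCone_base_change hI hc' hc hN hNc)

end Aux

/-- If `P` is a locally convex subset of a finite-dimensional real
affine space and `I ⊆ P` is an open line segment, then the tangent cone
`C_a P = ℝ≥0 • ((P ∩ U) - a)` (computed from any convex neighborhood `P ∩ U` of
`a` in `P`) is the same for all `a ∈ I`. -/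
theorem tangentCone_constant_on_open_segment
    {V : Type*} [NormedAddCommGroup V] [NormedSpace ℝ V] [FiniteDimensional ℝ V]
    (P : Set V)
    (hloc : ∀ x ∈ P, ∃ N : Set V, N ⊆ P ∧ Convex ℝ N ∧ N ∈ nhdsWithin x P)
    (x y : V) (hI : openSegment ℝ x y ⊆ P)
    (a b : V) (ha : a ∈ openSegment ℝ x y) (hb : b ∈ openSegment ℝ x y)
    (Na Nb : Set V)
    (hNaP : Na ⊆ P) (hNaConv : Convex ℝ Na) (hNa : Na ∈ nhdsWithin a P)
    (hNbP : Nb ⊆ P) (hNbConv : Convex ℝ Nb) (hNb : Nb ∈ nhdsWithin b P) :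
    {v : V | ∃ t : ℝ, 0 ≤ t ∧ ∃ p ∈ Na, v = t • (p - a)} =
      {v : V | ∃ t : ℝ, 0 ≤ t ∧ ∃ p ∈ Nb, v = t • (p - b)} := by
  classical
  show myCone Na a = myCone Nb b
  choose! N hNP hNconv hNmem using hloc
  set seg := openSegment ℝ x y with hseg
  have hU : ∀ c ∈ seg, ∃ u : Set V, IsOpen u ∧ c ∈ u ∧ P ∩ u ⊆ N c := by
    intro c hc
    obtain ⟨u, hu, hcu, h⟩ := mem_nhdsWithin.1 (hNmem c (hI hc))
    exact ⟨u, hu, hcu, fun z hz => h ⟨hz.2, hz.1⟩⟩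
  choose! U hUopen hUmem hUsub using hU
  -- key local constancy
  have key : ∀ c ∈ seg, ∀ c' ∈ seg, c' ∈ U c → myCone (N c') c' = myCone (N c) c := by
    intro c hc c' hc' hcU
    have hcP := hI hc
    have hc'P := hI hc'
    have hNcc' : N c ∈ nhdsWithin c' P :=
      mem_nhdsWithin.2 ⟨U c, hUopen c hc, hcU, fun z hz => hUsub c hc ⟨hz.2, hz.1⟩⟩
    have e1 : myCone (N c) c = myCone (N c) c' :=
      myCone_local_eq hI hc hc' (hNconv c hcP) (hNmem c hcP) hNcc'
    have e2 : myCone (N c) c' = myCone (N c') c' :=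
      myCone_welldef_eq hc'P (hNconv c hcP) (hNP c hcP) hNcc'
        (hNconv c' hc'P) (hNP c' hc'P) (hNmem c' hc'P)
    exact (e1.trans e2).symm
  have hconn : IsPreconnected seg := (convex_openSegment x y).isPreconnected
  set T := myCone Na a with hT
  have haT : myCone (N a) a = T :=
    myCone_welldef_eq (hI ha) (hNconv a (hI ha)) (hNP a (hI ha)) (hNmem a (hI ha))
      hNaConv hNaP hNa
  set u := ⋃ c ∈ {c ∈ seg | myCone (N c) c = T}, U c with hu_def
  set v := ⋃ c ∈ {c ∈ seg | myCone (N c) c ≠ T}, U c with hv_def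
  have hu : IsOpen u := isOpen_biUnion fun c hc => hUopen c hc.1
  have hv : IsOpen v := isOpen_biUnion fun c hc => hUopen c hc.1
  have hcover : seg ⊆ u ∪ v := by
    intro c hc
    by_cases h : myCone (N c) c = T
    · exact Or.inl (mem_biUnion ⟨hc, h⟩ (hUmem c hc))
    · exact Or.inr (mem_biUnion ⟨hc, h⟩ (hUmem c hc))
  have hdisj : seg ∩ (u ∩ v) = ∅ := by
    ext z
    simp only [mem_inter_iff, mem_empty_iff_false, iff_false]
    rintro ⟨hz, hzu, hzv⟩
    obtain ⟨c, hcA, hzc⟩ := mem_iUnion₂.1 hzu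
    obtain ⟨d, hdB, hzd⟩ := mem_iUnion₂.1 hzv
    exact hdB.2 ((key d hdB.1 z hz hzd).symm.trans (key c hcA.1 z hz hzc) |>.trans hcA.2)
  rcases isPreconnected_iff_subset_of_disjoint.1 hconn u v hu hv hcover hdisj with h | h
  · -- seg ⊆ u, so b is in some U c with cone = T
    obtain ⟨c, hcA, hbc⟩ := mem_iUnion₂.1 (h hb)
    have hbT : myCone (N b) b = T := (key c hcA.1 b hb hbc).trans hcA.2
    have : myCone Nb b = myCone (N b) b :=
      myCone_welldef_eq (hI hb) hNbConv hNbP hNb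
        (hNconv b (hI hb)) (hNP b (hI hb)) (hNmem b (hI hb))
    rw [this, hbT]
  · -- seg ⊆ v, contradiction at a
    obtain ⟨c, hcB, hac⟩ := mem_iUnion₂.1 (h ha)
    exact absurd ((key c hcB.1 a ha hac).symm.trans haT) hcB.2
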